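/- Let n > k > 2t with k - t prime, and let B be a family of k-element subsets of an n-element set such that no two members of B intersect in exactly t elements. Then |B| ≤ C(n, k-t-1). -/

import Mathlib

open Finset

namespace FW16

set_option linter.unusedSectionVars false
variable {α : Type*} [DecidableEq α] [Fintype α] {K : Type*} [Field K]

/-- Indicator ("monomial") function of `I ⊆ S`. -/
def chi (K : Type*) [Field K] (I : Finset α) : Finset α → K := fun S => if I ⊆ S then 1 else 0

lemma chi_mul (I J : Finset α) : chi K I * chi K J = chi K (I ∪ J) := by
  funext S
  simp only [chi, Pi.mul_apply, union_subset_iff]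
  by_cases h1 : I ⊆ S <;> by_cases h2 : J ⊆ S <;> simp [h1, h2]

/-- Span of monomials of degree at most `d`. -/
def Md (K : Type*) [Field K] (α : Type*) [DecidableEq α] [Fintype α] (d : ℕ) :
    Submodule K (Finset α → K) :=
  Submodule.span K (chi K '' {I : Finset α | I.card ≤ d})

lemma chi_mem_Md {I : Finset α} {d : ℕ} (h : I.card ≤ d) : chi K I ∈ Md K α d :=
  Submodule.subset_span ⟨I, h, rfl⟩

lemma Md_mono {a b : ℕ} (h : a ≤ b) : Md K α a ≤ Md K α b :=
  Submodule.span_mono (Set.image_mono fun _ hI => le_trans hI h)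

lemma mul_mem_Md {u v : Finset α → K} {a b : ℕ} (hu : u ∈ Md K α a) (hv : v ∈ Md K α b) :
    u * v ∈ Md K α (a + b) := by
  have h : Md K α a * Md K α b ≤ Md K α (a + b) := by
    rw [Md, Md, Submodule.span_mul_span]
    rw [Submodule.span_le]
    rintro x hx
    rw [Set.mem_mul] at hx
    obtain ⟨u', ⟨I, hI, rfl⟩, v', ⟨J, hJ, rfl⟩, rfl⟩ := hx
    rw [chi_mul]
    exact chi_mem_Md (le_trans (card_union_le _ _) (Nat.add_le_add hI hJ))
  exact h (Submodule.mul_mem_mul hu hv)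

lemma const_mem_Md (c : K) (d : ℕ) : (fun _ : Finset α => c) ∈ Md K α d := by
  have : (fun _ : Finset α => c) = c • chi K (∅ : Finset α) := by
    funext S; simp [chi]
  rw [this]
  exact Submodule.smul_mem _ _ (chi_mem_Md (by simp))

lemma card_inter_mem_Md (B : Finset α) :
    (fun S : Finset α => ((S ∩ B).card : K)) ∈ Md K α 1 := by
  have h : (fun S : Finset α => ((S ∩ B).card : K)) = ∑ i ∈ B, chi K {i} := by
    funext S
    rw [Finset.sum_apply]
    have : ∀ i ∈ B, chi K {i} S = if i ∈ S then (1 : K) else 0 := by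
      intro i _; simp [chi, singleton_subset_iff]
    rw [Finset.sum_congr rfl this, Finset.sum_boole, filter_mem_eq_inter]
    rw [inter_comm]
  rw [h]
  exact Submodule.sum_mem _ fun i _ => chi_mem_Md (by simp)

lemma linear_factor_mem_Md (B : Finset α) (c : K) :
    (fun S : Finset α => ((S ∩ B).card : K) - c) ∈ Md K α 1 := by
  have : (fun S : Finset α => ((S ∩ B).card : K) - c)
      = (fun S : Finset α => ((S ∩ B).card : K)) - (fun _ => c) := rfl
  rw [this]
  exact Submodule.sub_mem _ (card_inter_mem_Md B) (const_mem_Md c 1)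

lemma prod_mem_Md {β : Type*} (s : Finset β) (u : β → (Finset α → K))
    (h : ∀ j ∈ s, u j ∈ Md K α 1) : (∏ j ∈ s, u j) ∈ Md K α s.card := by
  induction s using Finset.cons_induction with
  | empty =>
      simp only [prod_empty, card_empty]
      have : (1 : Finset α → K) = chi K (∅ : Finset α) := by funext S; simp [chi]
      rw [this]; exact chi_mem_Md (by simp)
  | cons a s ha ih =>
      rw [prod_cons, card_cons]
      have := mul_mem_Md (h a (mem_cons_self a s)) (ih fun j hj => h j (mem_cons_of_mem hj))
      rwa [add_comm] at this

lemma sum_powerset_neg_one (s : Finset α) :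
    ∑ U ∈ s.powerset, (-1 : K) ^ U.card = if s = ∅ then 1 else 0 := by
  induction s using Finset.induction_on with
  | empty => simp
  | insert a s ha ih =>
      have hdisj : Disjoint s.powerset (s.powerset.image (insert a)) := by
        rw [Finset.disjoint_left]
        intro T hT hT'
        rw [mem_powerset] at hT
        obtain ⟨U, _, rfl⟩ := Finset.mem_image.1 hT'
        exact ha (hT (mem_insert_self a U))
      rw [powerset_insert, Finset.sum_union hdisj, Finset.sum_image ?inj]
      case inj =>
        intro U hU U' hU' h
        rw [Finset.mem_coe, mem_powerset] at hU hU'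
        have haU : a ∉ U := fun h' => ha (hU h')
        have haU' : a ∉ U' := fun h' => ha (hU' h')
        rw [← Finset.erase_insert haU, ← Finset.erase_insert haU', h]
      have hstep : ∀ U ∈ s.powerset, (-1 : K) ^ (insert a U).card = -((-1 : K) ^ U.card) := by
        intro U hU
        rw [mem_powerset] at hU
        rw [card_insert_of_notMem (fun h' => ha (hU h')), pow_succ]
        ring
      rw [Finset.sum_congr rfl hstep, Finset.sum_neg_distrib]
      · simp

/-- The "polynomial" determined by coefficients `C`. -/
def Qf (C : Finset α → K) (S : Finset α) : K := ∑ T ∈ S.powerset, C T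

/-- Möbius inversion on the subset lattice. -/
lemma mobius (C : Finset α → K) (I : Finset α) :
    C I = (-1 : K) ^ I.card * ∑ T ∈ I.powerset, (-1 : K) ^ T.card * Qf C T := by
  have swap : ∑ T ∈ I.powerset, (-1 : K) ^ T.card * Qf C T
      = ∑ J ∈ I.powerset, ∑ T ∈ I.powerset.filter (fun T => J ⊆ T), (-1 : K) ^ T.card * C J := by
    simp only [Qf, Finset.mul_sum]
    exact Finset.sum_comm' (by
      intro T J
      simp only [mem_powerset, mem_filter]
      constructor
      · rintro ⟨h1, h2⟩; exact ⟨⟨h1, h2⟩, h2.trans h1⟩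
      · rintro ⟨⟨h1, h2⟩, _⟩; exact ⟨h1, h2⟩)
  have inner : ∀ J ∈ I.powerset,
      ∑ T ∈ I.powerset.filter (fun T => J ⊆ T), (-1 : K) ^ T.card
        = if J = I then (-1 : K) ^ I.card else 0 := by
    intro J hJ
    rw [mem_powerset] at hJ
    have hbij : ∑ T ∈ I.powerset.filter (fun T => J ⊆ T), (-1 : K) ^ T.card
        = ∑ U ∈ (I \ J).powerset, (-1 : K) ^ (J ∪ U).card := by
      refine Finset.sum_nbij' (fun T => T \ J) (fun U => J ∪ U) ?_ ?_ ?_ ?_ ?_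
      · intro T hT
        rw [mem_filter, mem_powerset] at hT
        rw [mem_powerset]
        exact sdiff_subset_sdiff hT.1 Subset.rfl
      · intro U hU
        rw [mem_powerset] at hU
        rw [mem_filter, mem_powerset]
        refine ⟨union_subset hJ (hU.trans sdiff_subset), subset_union_left⟩
      · intro T hT
        rw [mem_filter] at hT
        exact union_sdiff_of_subset hT.2
      · intro U hU
        rw [mem_powerset] at hU
        show (J ∪ U) \ J = U
        rw [union_sdiff_left]
        exact sdiff_eq_self_of_disjoint (disjoint_of_subset_left hU sdiff_disjoint)
      · intro T hT
        rw [mem_filter] at hT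
        show (-1 : K) ^ T.card = (-1 : K) ^ (J ∪ T \ J).card
        rw [union_sdiff_of_subset hT.2]
    rw [hbij]
    have hcard : ∀ U ∈ (I \ J).powerset, (-1 : K) ^ (J ∪ U).card
        = (-1 : K) ^ J.card * (-1 : K) ^ U.card := by
      intro U hU
      rw [mem_powerset] at hU
      rw [card_union_of_disjoint (disjoint_of_subset_right hU disjoint_sdiff), pow_add]
    rw [Finset.sum_congr rfl hcard, ← Finset.mul_sum, sum_powerset_neg_one]
    by_cases hIJ : J = I
    · subst hIJ; simp
    · have : ¬(I \ J = ∅) := by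
        rw [sdiff_eq_empty_iff_subset]
        intro h; exact hIJ (Subset.antisymm hJ h)
      simp [this, hIJ]
  rw [swap]
  have hstep : ∑ J ∈ I.powerset, ∑ T ∈ I.powerset.filter (fun T => J ⊆ T), (-1 : K) ^ T.card * C J
      = (-1 : K) ^ I.card * C I := by
    rw [Finset.sum_eq_single_of_mem I (mem_powerset_self I)]
    · rw [← Finset.sum_mul, inner I (mem_powerset_self I)]
      simp
    · intro J hJ hne
      rw [← Finset.sum_mul, inner J hJ]
      simp [hne]
  rw [hstep, ← mul_assoc, ← mul_pow, neg_mul_neg, one_mul, one_pow, one_mul]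

lemma claimA_top (p : ℕ) (hp : 2 ≤ p) (A : Finset α) (C : Finset α → K)
    (hsuppA : ∀ T, C T ≠ 0 → T ⊆ A) (hsupp : ∀ T, C T ≠ 0 → T.card ≤ p - 2)
    (hvan : ∀ S, S ⊆ A → S.card % p ≠ p - 1 → Qf C S = 0) : ∀ I, C I = 0 := by
  intro I
  by_contra hCI
  apply hCI
  have hIA := hsuppA I hCI
  rw [mobius C I]
  have hz : ∀ T ∈ I.powerset, (-1 : K) ^ T.card * Qf C T = 0 := by
    intro T hT
    rw [mem_powerset] at hT
    have hTc : T.card ≤ p - 2 := le_trans (card_le_card hT) (hsupp I hCI)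
    have hmod : T.card % p ≠ p - 1 := by
      rw [Nat.mod_eq_of_lt (by omega)]; omega
    rw [hvan T (hT.trans hIA) hmod, mul_zero]
  rw [Finset.sum_congr rfl hz, Finset.sum_const_zero, mul_zero]

lemma restrict_Qf (C : Finset α → K) (a : α) (S : Finset α) (haS : a ∉ S) :
    Qf (fun T => if a ∈ T then 0 else C T + C (insert a T)) S = Qf C (insert a S) := by
  have hdisj : Disjoint S.powerset (S.powerset.image (insert a)) := by
    rw [Finset.disjoint_left]
    intro T hT hT'
    rw [mem_powerset] at hT
    obtain ⟨U, _, rfl⟩ := Finset.mem_image.1 hT'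
    exact haS (hT (mem_insert_self a U))
  have hinj : ∀ U ∈ S.powerset, ∀ U' ∈ S.powerset, insert a U = insert a U' → U = U' := by
    intro U hU U' hU' h
    rw [mem_powerset] at hU hU'
    have haU : a ∉ U := fun h' => haS (hU h')
    have haU' : a ∉ U' := fun h' => haS (hU' h')
    rw [← Finset.erase_insert haU, ← Finset.erase_insert haU', h]
  rw [Qf, Qf, powerset_insert, Finset.sum_union hdisj, Finset.sum_image hinj]
  have hc : ∀ T ∈ S.powerset,
      (if a ∈ T then (0 : K) else C T + C (insert a T)) = C T + C (insert a T) := by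
    intro T hT
    rw [mem_powerset] at hT
    rw [if_neg (fun h => haS (hT h))]
  rw [Finset.sum_congr rfl hc, Finset.sum_add_distrib]

lemma claimA_core (p : ℕ) (hp : 2 ≤ p) (rc : ℕ) (hrc : rc < p) (A : Finset α)
    (C : Finset α → K) (hA : p - 1 ≤ A.card)
    (hsuppA : ∀ T, C T ≠ 0 → T ⊆ A) (hsupp : ∀ T, C T ≠ 0 → T.card ≤ p - 2)
    (hvan : ∀ S, S ⊆ A → S.card % p ≠ rc → Qf C S = 0)
    (hres : ∀ a ∈ A, ∀ S, S ⊆ A.erase a → Qf C (insert a S) = 0) :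
    ∀ I, C I = 0 := by
  have hne : ∀ S, S ⊆ A → S.Nonempty → Qf C S = 0 := by
    rintro S hS ⟨a, haS⟩
    have haA : a ∈ A := hS haS
    have h1 : S.erase a ⊆ A.erase a := erase_subset_erase _ hS
    have h2 := hres a haA (S.erase a) h1
    rwa [insert_erase haS] at h2
  have hemp : Qf C ∅ = 0 := by
    by_cases h0 : rc = 0
    · obtain ⟨I0, hI0A, hI0c⟩ := exists_subset_card_eq (show p - 1 ≤ A.card from hA)
      have hCI0 : C I0 = 0 := by
        by_contra h
        have := hsupp I0 h
        omega
      have hm := mobius C I0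
      rw [hCI0] at hm
      rw [Finset.sum_eq_single_of_mem ∅ (empty_mem_powerset I0) ?hz] at hm
      case hz =>
        intro T hT hTne
        rw [hne T ((mem_powerset.1 hT).trans hI0A) (nonempty_iff_ne_empty.2 hTne), mul_zero]
      rw [card_empty, pow_zero, one_mul] at hm
      have hpow : ((-1 : K) ^ I0.card) ≠ 0 := pow_ne_zero _ (by norm_num)
      exact (mul_eq_zero.1 hm.symm).resolve_left hpow
    · exact hvan ∅ (empty_subset A) (by rw [card_empty, Nat.zero_mod]; omega)
  have hall : ∀ S, S ⊆ A → Qf C S = 0 := by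
    intro S hS
    rcases S.eq_empty_or_nonempty with rfl | h
    · exact hemp
    · exact hne S hS h
  intro I
  by_contra hCI
  apply hCI
  have hIA := hsuppA I hCI
  rw [mobius C I]
  rw [Finset.sum_congr rfl
    (fun T hT => by rw [hall T ((mem_powerset.1 hT).trans hIA), mul_zero]),
    Finset.sum_const_zero, mul_zero]

lemma mod_shift (p rc r' : ℕ) (hp : 2 ≤ p) (hrc : rc < p)
    (hr' : (rc = 0 ∧ r' = p - 1) ∨ (0 < rc ∧ r' = rc - 1)) :
    ∀ m : ℕ, m % p ≠ r' → (m + 1) % p ≠ rc := by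
  intro m hm
  have hq : m % p < p := Nat.mod_lt _ (by omega)
  have h1 : (m + 1) % p = (m % p + 1) % p := by
    conv_lhs => rw [Nat.add_mod, Nat.mod_eq_of_lt (show 1 < p by omega)]
  by_cases hqp : m % p + 1 = p
  · rw [h1, hqp, Nat.mod_self]
    omega
  · rw [h1, Nat.mod_eq_of_lt (by omega)]
    omega

lemma restrict_all (p : ℕ) (hp : 2 ≤ p) (rc r' : ℕ)
    (hshift : ∀ m : ℕ, m % p ≠ r' → (m + 1) % p ≠ rc)
    (A : Finset α) (C : Finset α → K)
    (hsuppA : ∀ T, C T ≠ 0 → T ⊆ A) (hsupp : ∀ T, C T ≠ 0 → T.card ≤ p - 2)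
    (hvan : ∀ S, S ⊆ A → S.card % p ≠ rc → Qf C S = 0)
    (a : α) (haA : a ∈ A)
    (prev : ∀ C' : Finset α → K,
      (∀ T, C' T ≠ 0 → T ⊆ A.erase a) → (∀ T, C' T ≠ 0 → T.card ≤ p - 2) →
      (∀ S, S ⊆ A.erase a → S.card % p ≠ r' → Qf C' S = 0) → ∀ I, C' I = 0) :
    ∀ S, S ⊆ A.erase a → Qf C (insert a S) = 0 := by
  intro S hS
  have haS : a ∉ S := fun h => (notMem_erase a A) (hS h)
  rw [← restrict_Qf C a S haS]
  have hall := prev (fun T => if a ∈ T then 0 else C T + C (insert a T)) ?_ ?_ ?_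
  · exact Finset.sum_eq_zero fun T _ => hall T
  · intro T hT
    by_cases haT : a ∈ T
    · rw [if_pos haT] at hT; exact absurd rfl hT
    · rw [if_neg haT] at hT
      have hTA : T ⊆ A := by
        by_cases h1 : C T ≠ 0
        · exact hsuppA T h1
        · push_neg at h1
          rw [h1, zero_add] at hT
          exact (subset_insert a T).trans (hsuppA _ hT)
      exact subset_erase.2 ⟨hTA, haT⟩
  · intro T hT
    by_cases haT : a ∈ T
    · rw [if_pos haT] at hT; exact absurd rfl hT
    · rw [if_neg haT] at hT
      by_cases h1 : C T ≠ 0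
      · exact hsupp T h1
      · push_neg at h1
        rw [h1, zero_add] at hT
        have := hsupp _ hT
        rw [card_insert_of_notMem haT] at this
        omega
  · intro S' hS' hS'c
    have haS' : a ∉ S' := fun h => (notMem_erase a A) (hS' h)
    rw [restrict_Qf C a S' haS']
    apply hvan (insert a S') (insert_subset haA (hS'.trans (erase_subset a A)))
    rw [card_insert_of_notMem haS']
    exact hshift S'.card hS'c

lemma claimA (p : ℕ) (hp : 2 ≤ p) :
    ∀ r : ℕ, r < p → ∀ (A : Finset α) (C : Finset α → K), p - 1 + r ≤ A.card →
    (∀ T, C T ≠ 0 → T ⊆ A) → (∀ T, C T ≠ 0 → T.card ≤ p - 2) →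
    (∀ S, S ⊆ A → S.card % p ≠ r → Qf C S = 0) → ∀ I, C I = 0 := by
  intro r
  induction r with
  | zero =>
      intro hr A C hA hsuppA hsupp hvan
      apply claimA_core p hp 0 (by omega) A C (by omega) hsuppA hsupp hvan
      intro a haA
      exact restrict_all p hp 0 (p - 1)
        (mod_shift p 0 (p - 1) hp (by omega) (Or.inl ⟨rfl, rfl⟩))
        A C hsuppA hsupp hvan a haA
        (fun C' h1 h2 h3 => claimA_top p hp (A.erase a) C' h1 h2 h3)
  | succ r ih =>
      intro hr A C hA hsuppA hsupp hvan
      apply claimA_core p hp (r + 1) hr A C (by omega) hsuppA hsupp hvan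
      intro a haA
      refine restrict_all p hp (r + 1) r
        (mod_shift p (r + 1) r hp hr (Or.inr ⟨by omega, by omega⟩))
        A C hsuppA hsupp hvan a haA ?_
      intro C' h1 h2 h3
      apply ih (by omega) (A.erase a) C' ?_ h1 h2 h3
      rw [card_erase_of_mem haA]
      omega

end FW16

section
open FW16

/-- The prime case of the Frankl–Wilson theorem (Theorem 3.1 of Mubayi–Rödl):
if `n > k > 2t`, `k - t` is prime, and `𝓑` is a family of `k`-element subsets of an
`n`-element set no two members of which intersect in exactly `t` elements, then
`|𝓑| ≤ C(n, k-t-1)`. -/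
theorem stmt_16 {α : Type*} [DecidableEq α] [Fintype α] (n k t : ℕ)
    (hn : Fintype.card α = n) (hnk : k < n) (hkt : 2 * t < k) (hp : (k - t).Prime)
    (𝓑 : Finset (Finset α)) (hk : ∀ B ∈ 𝓑, B.card = k)
    (homit : ∀ B ∈ 𝓑, ∀ B' ∈ 𝓑, (B ∩ B').card ≠ t) :
    𝓑.card ≤ n.choose (k - t - 1) := by
  classical
  set p := k - t with hpdef
  have hp2 : 2 ≤ p := hp.two_le
  have htp : t < p := by omega
  have hkeq : k = t + p := by omega
  haveI : Fact p.Prime := ⟨hp⟩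
  haveI : NeZero p := ⟨by omega⟩
  set K := ZMod p with hKdef
  set Jset : Finset (Finset α) := univ.filter (fun I => I.card ≤ p - 2) with hJdef
  set f : Finset α → (Finset α → K) := fun B S =>
    ∏ j ∈ Icc 1 (p - 1), (((S ∩ B).card : K) - ((t + j : ℕ) : K)) with hfdef
  set g : Finset α → (Finset α → K) := fun I S =>
    (if I ⊆ S then (1 : K) else 0) * ((S.card : K) - ((k : ℕ) : K)) with hgdef
  set v : (↥𝓑 ⊕ ↥Jset) → (Finset α → K) :=
    Sum.elim (fun B => f ↑B) (fun I => g ↑I) with hvdef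
  -- basic cast fact
  have hkK : ((k : ℕ) : K) = ((t : ℕ) : K) := by
    rw [hkeq]; push_cast; rw [ZMod.natCast_self]; ring
  -- the diagonal values are nonzero
  have hfself : ∀ B ∈ 𝓑, f B B ≠ 0 := by
    intro B hB
    rw [hfdef]
    simp only [inter_self]
    rw [Finset.prod_ne_zero_iff]
    intro j hj
    rw [mem_Icc] at hj
    rw [hk B hB, hkK, sub_ne_zero]
    intro hcontra
    have : ((j : ℕ) : K) = 0 := by
      push_cast at hcontra ⊢
      linear_combination -hcontra
    rw [ZMod.natCast_eq_zero_iff] at this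
    have := Nat.eq_zero_of_dvd_of_lt this (by omega)
    omega
  -- off-diagonal values vanish
  have hfother : ∀ B ∈ 𝓑, ∀ B0 ∈ 𝓑, B ≠ B0 → f B B0 = 0 := by
    intro B hB B0 hB0 hne
    set y := (B0 ∩ B).card with hydef
    have hyne : y ≠ t := homit B0 hB0 B hB
    have hylt : y < k := by
      have hsub : B0 ∩ B ⊆ B0 := inter_subset_left
      have h1 : y ≤ k := by rw [← hk B0 hB0]; exact card_le_card hsub
      rcases lt_or_eq_of_le h1 with h | h
      · exact h
      · exfalso
        have : B0 ∩ B = B0 := eq_of_subset_of_card_le hsub (by rw [hk B0 hB0, ← h])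
        have hsub2 : B0 ⊆ B := by rw [← this]; exact inter_subset_right
        have : B0 = B := eq_of_subset_of_card_le hsub2 (by rw [hk B0 hB0, hk B hB])
        exact hne this.symm
    have hymod : y % p ≠ t % p := by
      intro hcontra
      rw [Nat.mod_eq_of_lt htp] at hcontra
      have hdm := Nat.div_add_mod y p
      rw [hcontra] at hdm
      have hq0 : y / p = 0 := by
        by_contra hq
        have h1 : 1 ≤ y / p := Nat.one_le_iff_ne_zero.2 hq
        have h2 : p * 1 ≤ p * (y / p) := Nat.mul_le_mul_left p h1
        rw [mul_one] at h2
        omega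
      rw [hq0, mul_zero] at hdm
      omega
    have hxne : ((y : ℕ) : K) - ((t : ℕ) : K) ≠ 0 := by
      rw [sub_ne_zero]
      intro hcontra
      exact hymod ((ZMod.natCast_eq_natCast_iff y t p).1 hcontra)
    set x : K := ((y : ℕ) : K) - ((t : ℕ) : K) with hxdef
    have hjne : x.val ≠ 0 := fun h0 => hxne ((ZMod.val_eq_zero x).1 h0)
    have hjlt : x.val < p := ZMod.val_lt x
    rw [hfdef]
    apply Finset.prod_eq_zero (i := x.val) (by rw [mem_Icc]; omega)
    have hcast : ((x.val : ℕ) : K) = x := ZMod.natCast_zmod_val x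
    rw [← hydef]
    push_cast
    rw [hcast, hxdef]
    push_cast
    ring
  -- g vanishes on 𝓑
  have hgB : ∀ I : Finset α, ∀ B ∈ 𝓑, g I B = 0 := by
    intro I B hB
    rw [hgdef]
    simp only [hk B hB, sub_self, mul_zero]
  -- membership in the span of monomials of degree ≤ p - 1
  have hmemv : ∀ i, v i ∈ Md K α (p - 1) := by
    intro i
    cases i with
    | inl B =>
        show f ↑B ∈ Md K α (p - 1)
        have hfeq : f ↑B = ∏ j ∈ Icc 1 (p - 1),
            (fun S : Finset α => ((S ∩ ↑B).card : K) - ((t + j : ℕ) : K)) := by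
          funext S
          rw [Finset.prod_apply]
        rw [hfeq]
        have hcard : (Icc 1 (p - 1)).card = p - 1 := by
          rw [Nat.card_Icc]; omega
        have hprod := prod_mem_Md (Icc 1 (p - 1))
          (fun j => fun S : Finset α => ((S ∩ (↑B : Finset α)).card : K) - ((t + j : ℕ) : K))
          (fun j _ => linear_factor_mem_Md (↑B : Finset α) _)
        rwa [hcard] at hprod
    | inr I =>
        show g ↑I ∈ Md K α (p - 1)
        have hgeq : g ↑I = chi K (↑I : Finset α) *
            (fun S : Finset α => ((S ∩ univ).card : K) - ((k : ℕ) : K)) := by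
          funext S
          simp only [hgdef, chi, Pi.mul_apply, inter_univ]
        rw [hgeq]
        have hIc : (↑I : Finset α).card ≤ p - 2 := (mem_filter.1 I.2).2
        have h1 : p - 2 + 1 = p - 1 := by omega
        rw [← h1]
        exact mul_mem_Md (chi_mem_Md hIc) (linear_factor_mem_Md univ _)
  -- linear independence
  have hind : LinearIndependent K v := by
    rw [Fintype.linearIndependent_iff]
    intro coef hsum
    have heval : ∀ S : Finset α,
        (∑ B : ↥𝓑, coef (Sum.inl B) * f ↑B S) + (∑ I : ↥Jset, coef (Sum.inr I) * g ↑I S) = 0 := by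
      intro S
      have h1 := congrFun hsum S
      rw [Finset.sum_apply] at h1
      simp only [Pi.smul_apply, smul_eq_mul, Pi.zero_apply] at h1
      rw [Fintype.sum_sum_type] at h1
      simpa [hvdef] using h1
    have ha : ∀ B : ↥𝓑, coef (Sum.inl B) = 0 := by
      intro B0
      have h := heval ↑B0
      have hg0 : (∑ I : ↥Jset, coef (Sum.inr I) * g ↑I ↑B0) = 0 :=
        Finset.sum_eq_zero fun I _ => by rw [hgB ↑I ↑B0 B0.2, mul_zero]
      rw [hg0, add_zero] at h
      rw [Fintype.sum_eq_single B0 (fun B hB => by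
        rw [hfother ↑B B.2 ↑B0 B0.2 (Subtype.coe_injective.ne hB), mul_zero])] at h
      exact (mul_eq_zero.1 h).resolve_right (hfself ↑B0 B0.2)
    set Cc : Finset α → K := fun T => if hT : T ∈ Jset then coef (Sum.inr ⟨T, hT⟩) else 0
      with hCcdef
    have hCcval : ∀ I : ↥Jset, Cc ↑I = coef (Sum.inr I) := by
      intro I
      rw [hCcdef]
      simp only [I.2, dif_pos]
    have hQeq : ∀ S : Finset α,
        Qf Cc S = ∑ I : ↥Jset, coef (Sum.inr I) * (if (↑I : Finset α) ⊆ S then (1:K) else 0) := by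
      intro S
      have h1 : ∀ I : ↥Jset, coef (Sum.inr I) * (if (↑I : Finset α) ⊆ S then (1:K) else 0)
          = Cc ↑I * (if (↑I : Finset α) ⊆ S then (1:K) else 0) := by
        intro I; rw [hCcval]
      rw [Finset.sum_congr rfl (fun I _ => h1 I)]
      rw [Finset.sum_coe_sort Jset (fun T => Cc T * (if T ⊆ S then (1:K) else 0))]
      rw [Finset.sum_subset (subset_univ Jset) (by
        intro T _ hT
        rw [hCcdef]
        simp only [hT, dif_neg, not_false_iff, zero_mul])]
      simp_rw [mul_ite, mul_one, mul_zero]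
      rw [← Finset.sum_filter]
      have : univ.filter (fun T : Finset α => T ⊆ S) = S.powerset := by
        ext T; simp [mem_powerset]
      rw [this, Qf]
    have hvan : ∀ S : Finset α, S ⊆ univ → S.card % p ≠ t → Qf Cc S = 0 := by
      intro S _ hSmod
      have h := heval S
      have hf0 : (∑ B : ↥𝓑, coef (Sum.inl B) * f ↑B S) = 0 :=
        Finset.sum_eq_zero fun B _ => by rw [ha B, zero_mul]
      rw [hf0, zero_add] at h
      have hfactor : ∀ I : ↥Jset, coef (Sum.inr I) * g ↑I S
          = (coef (Sum.inr I) * (if (↑I : Finset α) ⊆ S then (1:K) else 0))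
            * ((S.card : K) - ((k:ℕ) : K)) := by
        intro I
        rw [hgdef]
        ring
      rw [Finset.sum_congr rfl (fun I _ => hfactor I), ← Finset.sum_mul, ← hQeq] at h
      have hLne : ((S.card : ℕ) : K) - ((k:ℕ) : K) ≠ 0 := by
        rw [sub_ne_zero, hkK]
        intro hcontra
        have := (ZMod.natCast_eq_natCast_iff S.card t p).1 hcontra
        rw [Nat.ModEq, Nat.mod_eq_of_lt htp] at this
        exact hSmod this
      exact (mul_eq_zero.1 h).resolve_right hLne
    have hzero : ∀ T, Cc T = 0 := by
      apply claimA p hp2 t htp univ Cc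
      · rw [card_univ, hn]; omega
      · exact fun T _ => subset_univ T
      · intro T hT
        rw [hCcdef] at hT
        by_cases hTJ : T ∈ Jset
        · rw [hJdef, mem_filter] at hTJ; exact hTJ.2
        · simp only at hT
          rw [dif_neg hTJ] at hT
          exact absurd rfl hT
      · exact hvan
    have hc : ∀ I : ↥Jset, coef (Sum.inr I) = 0 := by
      intro I
      rw [← hCcval I]
      exact hzero ↑I
    intro i
    cases i with
    | inl B => exact ha B
    | inr I => exact hc I
  -- counting
  set Kset : Finset (Finset α) := univ.filter (fun I => I.card ≤ p - 1) with hKsetdef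
  have hMd_eq : Md K α (p - 1) = Submodule.span K ↑(Kset.image (chi K)) := by
    rw [Md, Finset.coe_image, hKsetdef, Finset.coe_filter]
    congr 1
    congr 1
    ext I
    simp
  haveI : Module.Finite K ↥(Md K α (p - 1)) := by
    rw [hMd_eq]
    exact Module.Finite.span_of_finite K (Kset.image (chi K)).finite_toSet
  set v' : (↥𝓑 ⊕ ↥Jset) → ↥(Md K α (p - 1)) := fun i => ⟨v i, hmemv i⟩ with hv'def
  have hind' : LinearIndependent K v' := by
    apply LinearIndependent.of_comp (Md K α (p - 1)).subtype
    exact hind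
  have hcard1 : Fintype.card (↥𝓑 ⊕ ↥Jset) ≤ Module.finrank K ↥(Md K α (p - 1)) :=
    hind'.fintype_card_le_finrank
  have hcard2 : Module.finrank K ↥(Md K α (p - 1)) ≤ Kset.card := by
    rw [hMd_eq]
    exact le_trans (finrank_span_finset_le_card (Kset.image (chi K))) Finset.card_image_le
  have hcard3 : Fintype.card (↥𝓑 ⊕ ↥Jset) = 𝓑.card + Jset.card := by
    simp [Fintype.card_sum]
  have hsplit : Kset.card = Jset.card + n.choose (p - 1) := by
    have h1 : Kset.filter (fun I => I.card ≤ p - 2) = Jset := by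
      ext I
      simp only [hKsetdef, hJdef, mem_filter, mem_univ, true_and]
      constructor
      · rintro ⟨_, h⟩; exact h
      · intro h; exact ⟨by omega, h⟩
    have h2 : Kset.filter (fun I => ¬ I.card ≤ p - 2) = univ.filter (fun I => I.card = p - 1) := by
      ext I
      simp only [hKsetdef, mem_filter, mem_univ, true_and]
      omega
    have h3 := Finset.card_filter_add_card_filter_not
      (s := Kset) (p := fun I => I.card ≤ p - 2)
    rw [h1, h2] at h3
    have hE : (univ.filter (fun I : Finset α => I.card = p - 1)).card = n.choose (p - 1) := by
      have h4 : univ.filter (fun I : Finset α => I.card = p - 1)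
          = (univ : Finset α).powersetCard (p - 1) := by
        rw [powersetCard_eq_filter, powerset_univ]
      rw [h4, card_powersetCard, card_univ, hn]
    omega
  have hfinal : 𝓑.card + Jset.card ≤ Jset.card + n.choose (p - 1) := by
    rw [← hcard3, ← hsplit]
    exact le_trans hcard1 hcard2
  omega

end
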